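/- For the map f : ℂ → ℂ defined by f(z) = φ(z) + T(Im φ(z)), where φ(0) = 0, φ(z) = z²/|z| for z ≠ 0, and T(s) = 2|s|/√3 + 2, every orbit escapes to infinity: for every z ∈ ℂ, |fⁿ(z)| → ∞ as n → ∞. -/

import Mathlib

open Complex

/-- The degree-two angle-doubling map `φ(r e^{iθ}) = r e^{2iθ}`. -/
noncomputable def phiMap (z : ℂ) : ℂ :=
  if z = 0 then 0 else z ^ 2 / (‖z‖ : ℂ)

/-- The translation amount `T(s) = 2|s|/√3 + 2`. -/
noncomputable def Tshift (s : ℝ) : ℝ := 2 * |s| / Real.sqrt 3 + 2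

/-- The map `f(z) = φ(z) + T(Im φ(z))`. -/
noncomputable def fMap (z : ℂ) : ℂ := phiMap z + (Tshift ((phiMap z).im) : ℂ)

/-- The good sector (union of the sectors of half-angle π/3 around the
positive and negative real axes). -/
def GoodSec (z : ℂ) : Prop := z.im ^ 2 ≤ 3 * z.re ^ 2

lemma sqrt3_pos : (0:ℝ) < Real.sqrt 3 := Real.sqrt_pos.2 (by norm_num)

lemma sqrt3_sq : (Real.sqrt 3) ^ 2 = 3 := Real.sq_sqrt (by norm_num)

/-- Real inequality behind the growth lemma. -/
lemma realA (k X a r : ℝ) (hk : k ^ 2 = 3) (hk0 : 0 < k) (ha : 0 ≤ a) (hr : 0 < r)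
    (hXa : X ^ 2 + a ^ 2 = r ^ 2) (hQ : 0 ≤ 2 * X + r) :
    (r + 1) ^ 2 ≤ (X + (2 * a / k + 2)) ^ 2 + a ^ 2 := by
  have hdiv : 2 * a / k = 2 * k * a / 3 := by
    field_simp
    linear_combination (-a) * hk
  have h1 : 0 ≤ a + k * X := by
    rcases le_or_gt 0 X with hX | hX
    · nlinarith [mul_nonneg hk0.le hX]
    · have hsq : k ^ 2 * X ^ 2 ≤ a ^ 2 := by nlinarith
      nlinarith [mul_pos hk0 (neg_pos.2 hX)]
  have h2 : k * r ≤ 2 * (k * X + 2 * a) := by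
    rcases le_or_gt (r - 2 * X) 0 with hX | hX
    · nlinarith [mul_nonneg hk0.le ha]
    · have hsq : 3 * (r - 2 * X) ^ 2 ≤ 16 * a ^ 2 := by
        nlinarith [mul_nonneg hQ (show (0:ℝ) ≤ 13 * r - 14 * X by nlinarith)]
      nlinarith [mul_pos hk0 hX, mul_nonneg hk0.le ha]
  rw [hdiv]
  nlinarith [mul_nonneg ha h1, mul_nonneg hk0.le (sub_nonneg.2 h2)]

/-- Real inequality behind the decrease lemma. -/
lemma realB (k X a r : ℝ) (hk : k ^ 2 = 3) (hk0 : 0 < k) (ha : 0 ≤ a) (hr : 0 < r)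
    (hXa : X ^ 2 + a ^ 2 = r ^ 2)
    (hB : 3 * (X + (2 * a / k + 2)) ^ 2 < a ^ 2) :
    (X + (2 * a / k + 2)) ^ 2 + a ^ 2 ≤ (r - 1) ^ 2 ∧ 1 ≤ r := by
  have hdiv : 2 * a / k = 2 * k * a / 3 := by
    field_simp
    linear_combination (-a) * hk
  rw [hdiv] at hB ⊢
  set u : ℝ := X + (2 * k * a / 3 + 2) with hu
  have s1 : k * u < a := by
    have h : (k * u) ^ 2 < a ^ 2 := by nlinarith
    nlinarith [mul_nonneg hk0.le ha]
  have s2 : a + 2 * k < -(k * X) := by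
    have : k * u = k * X + 2 * a + 2 * k := by
      rw [hu]; nlinarith [hk]
    nlinarith
  have s3 : (a + 2 * k) ^ 2 < 3 * X ^ 2 := by
    nlinarith [mul_pos (show (0:ℝ) < a + 2*k by linarith) (lt_of_le_of_lt (show (0:ℝ) ≤ a + 2*k by linarith) s2)]
  have s4 : 2 * a + k < k * r := by
    have h : (2 * a + k) ^ 2 < (k * r) ^ 2 := by nlinarith
    nlinarith [mul_pos hk0 hr, (show (0:ℝ) < 2*a + k by linarith)]
  -- hence k*(r-1) > 2a and r > 1
  have s5 : 2 * a < k * (r - 1) := by nlinarith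
  constructor
  · nlinarith [mul_nonneg ha (le_of_lt (lt_of_le_of_lt (show (0:ℝ) ≤ 2*a by linarith) s5))]
  · nlinarith

lemma abs_phiMap (z : ℂ) : ‖phiMap z‖ = ‖z‖ := by
  unfold phiMap
  split_ifs with h
  · simp [h]
  · rw [norm_div, norm_pow, Complex.norm_real, norm_norm, sq,
      mul_div_assoc, div_self (by simpa using h), mul_one]

lemma phiMap_eq (z : ℂ) (hz : z ≠ 0) :
    phiMap z = z ^ 2 / (‖z‖ : ℂ) := by simp [phiMap, hz]

lemma fMap_re (z : ℂ) : (fMap z).re = (phiMap z).re + Tshift ((phiMap z).im) := by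
  simp [fMap]

lemma fMap_im (z : ℂ) : (fMap z).im = (phiMap z).im := by
  simp [fMap]

lemma abs_sq_eq (w : ℂ) : (‖w‖) ^ 2 = w.re ^ 2 + w.im ^ 2 := by
  rw [Complex.sq_norm, Complex.normSq_apply]; ring

/-- Growth lemma: on the good sector, the modulus grows by at least 1. -/
lemma lemA (z : ℂ) (h : GoodSec z) :
    ‖z‖ + 1 ≤ ‖fMap z‖ := by
  rcases eq_or_ne z 0 with rfl | hz
  · have : fMap 0 = ((2:ℝ) : ℂ) := by
      simp [fMap, phiMap, Tshift]
    rw [this]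
    simp
  · set r := ‖z‖ with hr
    have hr0 : 0 < r := by simpa [hr] using (norm_pos_iff.2 hz)
    set X := (phiMap z).re with hX
    set Y := (phiMap z).im with hY
    have hXY : X ^ 2 + Y ^ 2 = r ^ 2 := by
      rw [hX, hY, ← abs_sq_eq, abs_phiMap]
    -- GoodSector gives 0 ≤ 2X + r
    have hQ : 0 ≤ 2 * X + r := by
      have hXval : X = (z.re ^ 2 - z.im ^ 2) / r := by
        rw [hX, phiMap_eq z hz, Complex.div_ofReal_re]
        congr 1
        simp [pow_two, Complex.mul_re]
      have hr2 : r ^ 2 = z.re ^ 2 + z.im ^ 2 := abs_sq_eq z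
      have : 2 * X + r = (3 * z.re ^ 2 - z.im ^ 2) / r := by
        rw [hXval]
        field_simp
        nlinarith [hr2]
      rw [this]
      apply div_nonneg _ hr0.le
      have := h
      unfold GoodSec at this
      linarith
    have habs : (‖fMap z‖) ^ 2 = (X + (2 * |Y| / Real.sqrt 3 + 2)) ^ 2 + Y ^ 2 := by
      rw [abs_sq_eq, fMap_re, fMap_im, ← hX, ← hY, Tshift]
    have key := realA (Real.sqrt 3) X |Y| r sqrt3_sq sqrt3_pos (abs_nonneg Y) hr0
      (by rw [_root_.sq_abs]; exact hXY) hQ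
    rw [_root_.sq_abs] at key
    rw [← habs] at key
    nlinarith [norm_nonneg (fMap z), hr0]

/-- Decrease lemma: if the image is outside the good sector, the modulus
dropped by at least 1. -/
lemma lemB (z : ℂ) (h : ¬ GoodSec (fMap z)) :
    ‖fMap z‖ ≤ ‖z‖ - 1 := by
  rcases eq_or_ne z 0 with rfl | hz
  · exfalso
    apply h
    have : fMap 0 = ((2:ℝ) : ℂ) := by simp [fMap, phiMap, Tshift]
    rw [this]
    unfold GoodSec
    simp
  · set r := ‖z‖ with hr
    have hr0 : 0 < r := by simpa [hr] using (norm_pos_iff.2 hz)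
    set X := (phiMap z).re with hX
    set Y := (phiMap z).im with hY
    have hXY : X ^ 2 + Y ^ 2 = r ^ 2 := by
      rw [hX, hY, ← abs_sq_eq, abs_phiMap]
    have hre : (fMap z).re = X + (2 * |Y| / Real.sqrt 3 + 2) := by
      rw [fMap_re, ← hX, ← hY, Tshift]
    have him : (fMap z).im = Y := fMap_im z
    have hB : 3 * (X + (2 * |Y| / Real.sqrt 3 + 2)) ^ 2 < |Y| ^ 2 := by
      unfold GoodSec at h
      push_neg at h
      rw [hre, him] at h
      rw [_root_.sq_abs]
      linarith
    obtain ⟨key, hr1'⟩ := realB (Real.sqrt 3) X |Y| r sqrt3_sq sqrt3_pos (abs_nonneg Y) hr0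
      (by rw [_root_.sq_abs]; exact hXY) hB
    have habs : (‖fMap z‖) ^ 2 = (X + (2 * |Y| / Real.sqrt 3 + 2)) ^ 2 + Y ^ 2 := by
      rw [abs_sq_eq, hre, him]
    rw [_root_.sq_abs] at key
    rw [← habs] at key
    nlinarith [norm_nonneg (fMap z)]

/-- Eventually the orbit enters the good sector. -/
lemma enters_good (z : ℂ) : ∃ N, GoodSec (fMap^[N] z) := by
  by_contra hcon
  push_neg at hcon
  have key : ∀ n : ℕ, ‖fMap^[n] z‖ ≤ ‖z‖ - n := by
    intro n
    induction n with
    | zero => simp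
    | succ n ih =>
      rw [Function.iterate_succ_apply']
      have hb := lemB (fMap^[n] z) (fun hg => hcon (n + 1) (by
        rwa [Function.iterate_succ_apply']))
      push_cast
      linarith
  obtain ⟨n, hn⟩ := exists_nat_gt (‖z‖)
  have := key n
  nlinarith [norm_nonneg (fMap^[n] z)]

/-- Once in the good sector, the orbit stays there and grows. -/
lemma growth (w : ℂ) (hw : GoodSec w) (m : ℕ) :
    GoodSec (fMap^[m] w) ∧ ‖w‖ + m ≤ ‖fMap^[m] w‖ := by
  induction m with
  | zero => exact ⟨hw, by simp⟩
  | succ m ih =>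
    obtain ⟨hG, hA⟩ := ih
    have hstep := lemA _ hG
    have hGnext : GoodSec (fMap (fMap^[m] w)) := by
      by_contra hng
      have := lemB _ hng
      have h0 := norm_nonneg (fMap^[m] w)
      linarith
    rw [Function.iterate_succ_apply']
    refine ⟨hGnext, ?_⟩
    push_cast
    linarith

theorem fMap_orbits_escape_to_infinity :
    ∀ z : ℂ, Filter.Tendsto (fun n : ℕ => ‖fMap^[n] z‖)
      Filter.atTop Filter.atTop := by
  intro z
  obtain ⟨N, hN⟩ := enters_good z
  rw [Filter.tendsto_atTop]
  intro b
  filter_upwards [Filter.eventually_ge_atTop (N + ⌈b⌉₊)] with n hn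
  have hNn : N ≤ n := le_trans (Nat.le_add_right _ _) hn
  have hm := (growth _ hN (n - N)).2
  rw [← Function.iterate_add_apply, Nat.sub_add_cancel hNn] at hm
  have h1 : (⌈b⌉₊ : ℝ) ≤ ((n - N : ℕ) : ℝ) := by
    exact_mod_cast Nat.le_sub_of_add_le (by omega)
  have h2 : b ≤ (⌈b⌉₊ : ℝ) := Nat.le_ceil b
  have h0 := norm_nonneg (fMap^[N] z)
  linarith
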